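/- Let μ = ⨂_{k=1}^∞ μ_k be a product of symmetric (μ_k(-A) = μ_k(A)) probability measures on ℝ^{m_k} and let f be a μ-integrable linear functional on ℝ^∞. Then the conditional expectation of f with respect to the σ-algebra of the first m̃_n coordinates equals x ↦ f(x_1,...,x_{m̃_n},0,0,...) μ-a.e.; in particular the tail-integral constant c_n = ∫ f(0,...,0,y) d(⨂_{k>n}μ_k)(y) vanishes for every n. -/

import Mathlib

open MeasureTheory Set Filter Topology Pointwise ENNReal

/-- `μ` is the countable product of the probability measures `μs k`:
it assigns the product value to every finite-dimensional cylinder. -/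
def IsProductMeasure {E : ℕ → Type*} [∀ k, MeasurableSpace (E k)]
    (μs : ∀ k, Measure (E k)) (μ : Measure (∀ k, E k)) : Prop :=
  ∀ (n : ℕ) (s : ∀ k, Set (E k)), (∀ k, MeasurableSet (s k)) →
    μ {x | ∀ k < n, x k ∈ s k} = ∏ k ∈ Finset.range n, μs k (s k)

/-- The σ-algebra generated by the first `n` coordinate blocks of `∏_k ℝ^{m_k}`. -/
def coordSA (m : ℕ → ℕ) (n : ℕ) : MeasurableSpace (∀ k, Fin (m k) → ℝ) :=
  MeasurableSpace.comap (fun x (i : Fin n) => x i) inferInstance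

namespace Stmt14Aux

section PiSystem

variable {E : ℕ → Type*} [∀ k, MeasurableSpace (E k)]

/-- The π-system of finite-dimensional box cylinders. -/
def cylSets : Set (Set (∀ k, E k)) :=
  {S | ∃ (N : ℕ) (s : ∀ k, Set (E k)), (∀ k, MeasurableSet (s k)) ∧
      S = {x | ∀ k < N, x k ∈ s k}}

lemma cyl_measurableSet {N : ℕ} {s : ∀ k, Set (E k)} (hs : ∀ k, MeasurableSet (s k)) :
    MeasurableSet {x : ∀ k, E k | ∀ k < N, x k ∈ s k} := by
  have : {x : ∀ k, E k | ∀ k < N, x k ∈ s k}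
      = ⋂ (k : ℕ) (_ : k < N), (fun x => x k) ⁻¹' s k := by
    ext x; simp
  rw [this]
  exact MeasurableSet.biInter (to_countable _)
    fun k _ => measurable_pi_apply k (hs k)

lemma generateFrom_cylSets :
    (MeasurableSpace.pi : MeasurableSpace (∀ k, E k)) =
      MeasurableSpace.generateFrom (cylSets (E := E)) := by
  apply le_antisymm
  · refine iSup_le fun k => ?_
    refine measurable_iff_comap_le.mp ?_
    intro s hs
    have hset : (fun x : ∀ k, E k => x k) ⁻¹' s
        = {x | ∀ j < k + 1, x j ∈ Function.update (fun j => (univ : Set (E j))) k s j} := by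
      ext x
      simp only [mem_preimage, mem_setOf_eq]
      constructor
      · intro hx j hj
        rcases eq_or_ne j k with rfl | hne
        · rwa [Function.update_self]
        · rw [Function.update_of_ne hne]; trivial
      · intro hx
        have := hx k (Nat.lt_succ_self k)
        rwa [Function.update_self] at this
    rw [hset]
    refine MeasurableSpace.measurableSet_generateFrom ?_
    refine ⟨k + 1, _, fun j => ?_, rfl⟩
    rcases eq_or_ne j k with rfl | hne
    · rwa [Function.update_self]
    · rw [Function.update_of_ne hne]; exact MeasurableSet.univ
  · refine MeasurableSpace.generateFrom_le ?_
    rintro S ⟨N, s, hs, rfl⟩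
    exact cyl_measurableSet hs

lemma isPiSystem_cylSets : IsPiSystem (cylSets (E := E)) := by
  rintro S₁ ⟨N₁, s₁, h₁, rfl⟩ S₂ ⟨N₂, s₂, h₂, rfl⟩ -
  refine ⟨max N₁ N₂,
    fun k => (if k < N₁ then s₁ k else univ) ∩ (if k < N₂ then s₂ k else univ),
    fun k => ?_, ?_⟩
  · refine MeasurableSet.inter ?_ ?_ <;> split_ifs
    exacts [h₁ k, MeasurableSet.univ, h₂ k, MeasurableSet.univ]
  · ext x
    simp only [mem_inter_iff, mem_setOf_eq]
    constructor
    · rintro ⟨hA, hB⟩ k hk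
      constructor
      · split_ifs with h
        · exact hA k h
        · trivial
      · split_ifs with h
        · exact hB k h
        · trivial
    · intro h
      constructor
      · intro k hk
        have := (h k (lt_of_lt_of_le hk (le_max_left _ _))).1
        rwa [if_pos hk] at this
      · intro k hk
        have := (h k (lt_of_lt_of_le hk (le_max_right _ _))).2
        rwa [if_pos hk] at this

/-- Two probability measures which are both countable products of `μs` coincide. -/
lemma productMeasure_unique {μs : ∀ k, Measure (E k)}
    {μ ν : Measure (∀ k, E k)} [IsProbabilityMeasure μ] [IsProbabilityMeasure ν]
    (hμ : IsProductMeasure μs μ) (hν : IsProductMeasure μs ν) : μ = ν := by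
  refine ext_of_generate_finite _ generateFrom_cylSets isPiSystem_cylSets ?_ (by simp)
  rintro S ⟨N, s, hs, rfl⟩
  rw [hμ N s hs, hν N s hs]

end PiSystem

section Maps

variable {m : ℕ → ℕ}

variable (m) in
/-- Flip the sign of all coordinate blocks from index `n` on. -/
def Tmap (n : ℕ) : (∀ k, Fin (m k) → ℝ) → (∀ k, Fin (m k) → ℝ) :=
  fun x k => if k < n then x k else -(x k)

variable (m) in
/-- Glue the tail of the first argument with the head of the second. -/
def emap (n : ℕ) : ((∀ k, Fin (m k) → ℝ) × (∀ k, Fin (m k) → ℝ)) → (∀ k, Fin (m k) → ℝ) :=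
  fun p k => if k < n then p.2 k else p.1 k

lemma measurable_Tmap (n : ℕ) : Measurable (Tmap m n) := by
  refine measurable_pi_lambda _ fun k => ?_
  by_cases h : k < n <;> simp only [Tmap, h, if_true, if_false]
  · exact measurable_pi_apply k
  · exact (measurable_pi_apply k).neg

lemma measurable_emap (n : ℕ) : Measurable (emap m n) := by
  refine measurable_pi_lambda _ fun k => ?_
  by_cases h : k < n <;> simp only [emap, h, if_true, if_false]
  · exact (measurable_pi_apply k).comp measurable_snd
  · exact (measurable_pi_apply k).comp measurable_fst

variable {μs : ∀ k, Measure (Fin (m k) → ℝ)} {μ : Measure (∀ k, Fin (m k) → ℝ)}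

lemma isProductMeasure_map_Tmap
    (hsym : ∀ k, (μs k).map (fun v => -v) = μs k)
    (hμ : IsProductMeasure μs μ) (n : ℕ) :
    IsProductMeasure μs (μ.map (Tmap m n)) := by
  intro N s hs
  set s' : ∀ k, Set (Fin (m k) → ℝ) :=
    fun k => if k < n then s k else (fun v => -v) ⁻¹' s k with hs'def
  have hs' : ∀ k, MeasurableSet (s' k) := by
    intro k
    simp only [hs'def]
    split_ifs
    · exact hs k
    · exact measurable_neg (hs k)
  rw [Measure.map_apply (measurable_Tmap n) (cyl_measurableSet hs)]
  have hpre : Tmap m n ⁻¹' {x | ∀ k < N, x k ∈ s k} = {x | ∀ k < N, x k ∈ s' k} := by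
    ext x
    simp only [mem_preimage, mem_setOf_eq]
    refine forall₂_congr fun k hk => ?_
    by_cases h : k < n <;> simp [Tmap, s', h]
  rw [hpre, hμ N s' hs']
  refine Finset.prod_congr rfl fun k _ => ?_
  by_cases h : k < n
  · simp [s', h]
  · simp only [s', h, if_false]
    rw [← Measure.map_apply measurable_neg (hs k), hsym k]

lemma isProductMeasure_map_emap
    (hprob : ∀ k, IsProbabilityMeasure (μs k))
    [IsProbabilityMeasure μ]
    (hμ : IsProductMeasure μs μ) (n : ℕ) :
    IsProductMeasure μs ((μ.prod μ).map (emap m n)) := by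
  intro N s hs
  set sA : ∀ k, Set (Fin (m k) → ℝ) := fun k => if k < n then s k else univ with hsAdef
  set sB : ∀ k, Set (Fin (m k) → ℝ) := fun k => if k < n then univ else s k with hsBdef
  have hsA : ∀ k, MeasurableSet (sA k) := by
    intro k; simp only [hsAdef]; split_ifs; exacts [hs k, MeasurableSet.univ]
  have hsB : ∀ k, MeasurableSet (sB k) := by
    intro k; simp only [hsBdef]; split_ifs; exacts [MeasurableSet.univ, hs k]
  rw [Measure.map_apply (measurable_emap n) (cyl_measurableSet hs)]
  have hpre : emap m n ⁻¹' {x | ∀ k < N, x k ∈ s k}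
      = {x | ∀ k < N, x k ∈ sB k} ×ˢ {x | ∀ k < N, x k ∈ sA k} := by
    ext ⟨b, a⟩
    simp only [mem_preimage, mem_setOf_eq, mem_prod]
    constructor
    · intro h
      constructor
      · intro k hk
        by_cases hkn : k < n
        · simp [sB, hkn]
        · have := h k hk; simp only [emap, hkn, if_false] at this
          simpa [sB, hkn] using this
      · intro k hk
        by_cases hkn : k < n
        · have := h k hk; simp only [emap, hkn, if_true] at this
          simpa [sA, hkn] using this
        · simp [sA, hkn]
    · rintro ⟨hB, hA⟩ k hk
      by_cases hkn : k < n
      · have := hA k hk; simp only [sA, hkn, if_true] at this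
        simpa [emap, hkn] using this
      · have := hB k hk; simp only [sB, hkn, if_false] at this
        simpa [emap, hkn] using this
  rw [hpre, Measure.prod_prod, hμ N sB hsB, hμ N sA hsA, ← Finset.prod_mul_distrib]
  refine Finset.prod_congr rfl fun k _ => ?_
  haveI := hprob k
  by_cases h : k < n <;> simp [sA, sB, h, measure_univ]

end Maps

end Stmt14Aux

/-- For a product of symmetric measures, the conditional expectation of an integrable
linear functional with respect to the first `n` coordinate blocks is
`x ↦ f(x₁,…,x_{m̃ₙ},0,…)`; in particular all the tail constants `cₙ` vanish. -/
theorem stmt14 (m : ℕ → ℕ) (μs : ∀ k, Measure (Fin (m k) → ℝ))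
    (hprob : ∀ k, IsProbabilityMeasure (μs k))
    (hsym : ∀ k, (μs k).map (fun v => -v) = μs k)
    (μ : Measure (∀ k, Fin (m k) → ℝ)) [IsProbabilityMeasure μ]
    (hμ : IsProductMeasure μs μ)
    (f : (∀ k, Fin (m k) → ℝ) → ℝ)
    (hadd : ∀ x y, f (x + y) = f x + f y)
    (hsmul : ∀ (c : ℝ) (x), f (c • x) = c * f x)
    (hf : Integrable f μ) :
    (∀ n, μ[f | coordSA m n] =ᵐ[μ] fun x => f (fun k => if k < n then x k else 0)) ∧
    (∀ n, (∫ y, f (fun k => if k < n then 0 else y k) ∂μ) = 0) := by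
  have key : ∀ n : ℕ,
      (μ[f | coordSA m n] =ᵐ[μ] fun x => f (fun k => if k < n then x k else 0)) ∧
      ((∫ y, f (fun k => if k < n then 0 else y k) ∂μ) = 0) := by
    intro n
    set T := Stmt14Aux.Tmap m n with hTdef
    set P : (∀ k, Fin (m k) → ℝ) → (∀ k, Fin (m k) → ℝ) :=
      fun x k => if k < n then x k else 0 with hPdef
    set Q : (∀ k, Fin (m k) → ℝ) → (∀ k, Fin (m k) → ℝ) :=
      fun x k => if k < n then 0 else x k with hQdef
    have hT : Measurable T := Stmt14Aux.measurable_Tmap n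
    haveI : IsProbabilityMeasure (μ.map T) := Measure.isProbabilityMeasure_map hT.aemeasurable
    have hmapT : μ.map T = μ :=
      Stmt14Aux.productMeasure_unique (Stmt14Aux.isProductMeasure_map_Tmap hsym hμ n) hμ
    -- pointwise identities coming from linearity
    have hxT : ∀ x, f (P x) = (f x + f (T x)) / 2 := by
      intro x
      have hsum : x + T x = (2 : ℝ) • P x := by
        funext k
        by_cases h : k < n
        · simp [hTdef, Stmt14Aux.Tmap, hPdef, h, two_smul]
        · simp [hTdef, Stmt14Aux.Tmap, hPdef, h]
      have h2 : f x + f (T x) = 2 * f (P x) := by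
        rw [← hadd, hsum, hsmul]
      linarith
    have hxQ : ∀ x, f (Q x) = (f x - f (T x)) / 2 := by
      intro x
      have hPQ : P x + Q x = x := by
        funext k
        by_cases h : k < n <;> simp [hPdef, hQdef, h]
      have h1 : f x = f (P x) + f (Q x) := by
        rw [← hadd, hPQ]
      rw [hxT x] at h1
      linarith
    -- integrability
    have hfT : Integrable (fun x => f (T x)) μ := by
      have h1 : Integrable f (μ.map T) := by rw [hmapT]; exact hf
      have h2 : AEStronglyMeasurable f (μ.map T) := by
        rw [hmapT]; exact hf.aestronglyMeasurable
      exact (integrable_map_measure h2 hT.aemeasurable).mp h1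
    have hfP : Integrable (fun x => f (P x)) μ := by
      have := (hf.add hfT).div_const 2
      exact this.congr (ae_of_all _ fun x => (hxT x).symm)
    -- the sub-σ-algebra
    have hproj : Measurable (fun (x : ∀ k, Fin (m k) → ℝ) (i : Fin n) => x i) :=
      measurable_pi_lambda _ fun i => measurable_pi_apply _
    have hm : coordSA m n ≤ (inferInstance : MeasurableSpace (∀ k, Fin (m k) → ℝ)) :=
      measurable_iff_comap_le.mp hproj
    haveI : IsFiniteMeasure (μ.trim hm) := isFiniteMeasure_trim hm
    -- T fixes every coordSA-measurable set
    have hTs : ∀ s : Set (∀ k, Fin (m k) → ℝ), MeasurableSet[coordSA m n] s →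
        T ⁻¹' s = s := by
      intro s hs
      obtain ⟨A, hA, rfl⟩ := hs
      have hc : (fun (x : ∀ k, Fin (m k) → ℝ) (i : Fin n) => x i) ∘ T
          = fun x (i : Fin n) => x i := by
        funext x i
        show T x i = x i
        simp [hTdef, Stmt14Aux.Tmap, i.isLt]
      rw [← Set.preimage_comp, hc]
    -- T is measure preserving on coordSA-measurable sets
    have hrestrict : ∀ s : Set (∀ k, Fin (m k) → ℝ), MeasurableSet[coordSA m n] s →
        ∫ x in s, f x ∂μ = ∫ x in s, f (T x) ∂μ := by
      intro s hs
      have hs' : MeasurableSet s := hm s hs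
      have h1 : μ.restrict s = (μ.restrict s).map T := by
        conv_lhs => rw [← hmapT]
        rw [Measure.restrict_map hT hs', hTs s hs]
      have hA : AEStronglyMeasurable f ((μ.restrict s).map T) := by
        rw [← h1]; exact hf.aestronglyMeasurable.restrict
      calc ∫ x in s, f x ∂μ = ∫ x, f x ∂((μ.restrict s).map T) := by rw [← h1]
        _ = ∫ x, f (T x) ∂(μ.restrict s) := integral_map hT.aemeasurable hA
    have hseq : ∀ s : Set (∀ k, Fin (m k) → ℝ), MeasurableSet[coordSA m n] s → μ s < ⊤ →
        ∫ x in s, f (P x) ∂μ = ∫ x in s, f x ∂μ := by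
      intro s hs _
      have h1 : ∫ x in s, f (P x) ∂μ = ∫ x in s, (f x + f (T x)) / 2 ∂μ :=
        integral_congr_ae (ae_of_all _ fun x => hxT x)
      rw [h1, integral_div, integral_add hf.integrableOn hfT.integrableOn,
        ← hrestrict s hs]
      ring
    -- a coordSA-strongly measurable version of f ∘ P, via the product decomposition
    haveI : (ae μ).NeBot := ae_neBot.mpr (IsProbabilityMeasure.ne_zero μ)
    have he : Measurable (Stmt14Aux.emap m n) := Stmt14Aux.measurable_emap n
    haveI : IsProbabilityMeasure ((μ.prod μ).map (Stmt14Aux.emap m n)) :=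
      Measure.isProbabilityMeasure_map he.aemeasurable
    have hmape : (μ.prod μ).map (Stmt14Aux.emap m n) = μ :=
      Stmt14Aux.productMeasure_unique (Stmt14Aux.isProductMeasure_map_emap hprob hμ n) hμ
    obtain ⟨f', hf'sm, hff'⟩ := hf.aestronglyMeasurable
    obtain ⟨N, hsub, hNm, hN0⟩ := exists_measurable_superset_of_null (ae_iff.mp hff')
    have hprodN : (μ.prod μ) (Stmt14Aux.emap m n ⁻¹' N) = 0 := by
      rw [← Measure.map_apply he hNm, hmape]; exact hN0
    have hae2 : ∀ᵐ p ∂(μ.prod μ), Stmt14Aux.emap m n p ∉ N := by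
      rw [ae_iff]
      simpa [not_not] using (show (μ.prod μ) {a | Stmt14Aux.emap m n a ∈ N} = 0 from hprodN)
    obtain ⟨b₀, hb₀⟩ := (Measure.ae_ae_of_ae_prod hae2).exists
    set ext' : (∀ i : Fin n, Fin (m i) → ℝ) → (∀ k, Fin (m k) → ℝ) :=
      fun v k => if h : k < n then v ⟨k, h⟩ else b₀ k with hext'def
    have hext' : Measurable ext' := by
      refine measurable_pi_lambda _ fun k => ?_
      by_cases h : k < n
      · simp only [hext'def, dif_pos h]; exact measurable_pi_apply _
      · simp only [hext'def, dif_neg h]; exact measurable_const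
    have hcomp : ∀ a : ∀ k, Fin (m k) → ℝ,
        ext' (fun i : Fin n => a i) = Stmt14Aux.emap m n (b₀, a) := by
      intro a; funext k
      by_cases h : k < n <;> simp [hext'def, Stmt14Aux.emap, h]
    have heP : ∀ a : ∀ k, Fin (m k) → ℝ,
        Stmt14Aux.emap m n (b₀, a) = P a + Q b₀ := by
      intro a; funext k
      by_cases h : k < n <;> simp [Stmt14Aux.emap, hPdef, hQdef, h]
    set g' : (∀ k, Fin (m k) → ℝ) → ℝ :=
      fun a => f' (ext' (fun i : Fin n => a i)) - f (Q b₀) with hg'def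
    have hg'sm : StronglyMeasurable[coordSA m n] g' := by
      have h1 : Measurable[coordSA m n]
          (fun (x : ∀ k, Fin (m k) → ℝ) (i : Fin n) => x i) :=
        measurable_iff_comap_le.mpr le_rfl
      exact ((hf'sm.comp_measurable hext').comp_measurable h1).sub
        stronglyMeasurable_const
    have hg'ae : (fun x => f (P x)) =ᵐ[μ] g' := by
      filter_upwards [hb₀] with a ha
      have h1 : f (Stmt14Aux.emap m n (b₀, a)) = f' (Stmt14Aux.emap m n (b₀, a)) := by
        by_contra hne
        exact ha (hsub hne)
      have h2 : f (Stmt14Aux.emap m n (b₀, a)) = f (P a) + f (Q b₀) := by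
        rw [heP a, hadd]
      show f (P a) = f' (ext' (fun i : Fin n => a i)) - f (Q b₀)
      rw [hcomp a, ← h1, h2]
      ring
    have hAESM : AEStronglyMeasurable[coordSA m n] (fun x => f (P x)) μ :=
      ⟨g', hg'sm, hg'ae⟩
    constructor
    · exact (ae_eq_condExp_of_forall_setIntegral_eq hm hf
        (fun s _ _ => hfP.integrableOn) hseq hAESM).symm
    · have hA : AEStronglyMeasurable f (μ.map T) := by
        rw [hmapT]; exact hf.aestronglyMeasurable
      have hint : ∫ x, f (T x) ∂μ = ∫ x, f x ∂μ := by
        rw [← integral_map hT.aemeasurable hA, hmapT]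
      show (∫ y, f (Q y) ∂μ) = 0
      have h1 : ∫ y, f (Q y) ∂μ = ∫ y, (f y - f (T y)) / 2 ∂μ :=
        integral_congr_ae (ae_of_all _ fun y => hxQ y)
      rw [h1, integral_div, integral_sub hf hfT, hint, sub_self, zero_div]
  exact ⟨fun n => (key n).1, fun n => (key n).2⟩
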